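/- arXiv:1412.0216 — 4 statements merged into one kernel-verified Lean document; each statement's English description precedes it below -/
import Mathlib

section
/- For positive integers n and k, the following variant of the Chu-Vandermonde identity holds: the sum over ℓ from 0 to n of C(n+1, ℓ+1)·C(k-1, ℓ)·C(ℓ+1, 2) equals (n(n+1)/2)·C(n+k-2, n). -/
/-- Variant of the Chu-Vandermonde identity: for positive integers `n` and `k`,
`∑_{ℓ=0}^{n} C(n+1, ℓ+1) · C(k-1, ℓ) · C(ℓ+1, 2) = (n(n+1)/2) · C(n+k-2, n)`. -/
theorem chu_vandermonde_variant (n k : ℕ) (hn : 0 < n) (hk : 0 < k) :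
    ∑ ℓ ∈ Finset.range (n + 1),
        (n + 1).choose (ℓ + 1) * (k - 1).choose ℓ * (ℓ + 1).choose 2
      = n * (n + 1) / 2 * (n + k - 2).choose n := by
  obtain ⟨m, rfl⟩ : ∃ m, n = m + 1 := ⟨n - 1, by omega⟩
  obtain ⟨j, rfl⟩ : ∃ j, k = j + 1 := ⟨k - 1, by omega⟩
  simp only [Nat.add_sub_cancel, show m + 1 + (j + 1) - 2 = m + j by omega]
  rw [Finset.sum_range_succ']
  simp only [Nat.choose_one_right, Nat.choose_zero_right]
  have h0 : (1).choose 2 = 0 := by decide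
  rw [h0, Nat.mul_zero, Nat.add_zero]
  have hterm : ∀ ℓ ∈ Finset.range (m + 1),
      (m + 1 + 1).choose (ℓ + 1 + 1) * j.choose (ℓ + 1) * (ℓ + 1 + 1).choose 2
        = (m + 2).choose 2 * (m.choose ℓ * j.choose (ℓ + 1)) := by
    intro ℓ hℓ
    rw [Finset.mem_range] at hℓ
    have h := Nat.choose_mul (n := m + 2) (k := ℓ + 2) (s := 2) (by omega)
    have h1 : m + 2 - 2 = m := by omega
    have h2 : ℓ + 2 - 2 = ℓ := by omega
    rw [h1, h2] at h
    calc (m + 1 + 1).choose (ℓ + 1 + 1) * j.choose (ℓ + 1) * (ℓ + 1 + 1).choose 2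
        = (m + 2).choose (ℓ + 2) * (ℓ + 2).choose 2 * j.choose (ℓ + 1) := by ring_nf
      _ = (m + 2).choose 2 * (m.choose ℓ * j.choose (ℓ + 1)) := by rw [h]; ring
  rw [Finset.sum_congr rfl hterm, ← Finset.mul_sum]
  have hvdm : ∑ ℓ ∈ Finset.range (m + 1), m.choose ℓ * j.choose (ℓ + 1)
      = (m + j).choose (m + 1) := by
    rw [Nat.add_choose_eq, Finset.Nat.sum_antidiagonal_eq_sum_range_succ_mk]
    conv_rhs => rw [Finset.sum_range_succ]
    rw [Nat.choose_succ_self, Nat.zero_mul, Nat.add_zero, ← Finset.sum_range_reflect]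
    refine Finset.sum_congr rfl fun ℓ hℓ => ?_
    rw [Finset.mem_range] at hℓ
    rw [show m + 1 - 1 - ℓ = m - ℓ by omega, show m - ℓ + 1 = m + 1 - ℓ by omega,
      Nat.choose_symm (by omega)]
  rw [hvdm, Nat.choose_two_right]
  congr 2
  rw [show m + 2 - 1 = m + 1 from rfl, Nat.mul_comm]
end

section
/- For positive integers n, k with n ≥ 1, the sum over ℓ from 0 to n-1 of C(n+1, ℓ+1)·((n-ℓ)(n+ℓ+1)/2)·C(n+k-2, ℓ) equals (n(n+1)/2)·(C(k+2n-1, n) - C(k+2n-3, n)). -/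
open Finset

/-- Vandermonde variant 1. -/
lemma vand1 (n m : ℕ) :
    (∑ ℓ ∈ range n, (n + 1).choose (ℓ + 1) * m.choose ℓ) + m.choose n
      = (n + 1 + m).choose n := by
  rw [Nat.add_choose_eq, Finset.Nat.sum_antidiagonal_eq_sum_range_succ_mk,
    Finset.sum_range_succ']
  simp only [Nat.choose_zero_right, one_mul, Nat.sub_zero]
  congr 1
  rw [← Finset.sum_range_reflect]
  apply Finset.sum_congr rfl
  intro j hj
  rw [Finset.mem_range] at hj
  rw [show n - 1 - j + 1 = n + 1 - (j + 1) by omega, Nat.choose_symm (by omega),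
    show n - 1 - j = n - (j + 1) by omega]

/-- Vandermonde variant 2. -/
lemma vand2 (p m : ℕ) :
    (∑ j ∈ range p, p.choose j * m.choose (j + 1)) + m.choose (p + 1)
      = (p + m).choose (p + 1) := by
  rw [Nat.add_choose_eq, Finset.Nat.sum_antidiagonal_eq_sum_range_succ_mk,
    Finset.sum_range_succ']
  simp only [Nat.choose_zero_right, one_mul, Nat.sub_zero]
  congr 1
  rw [Finset.sum_range_succ, Nat.choose_succ_self, zero_mul, add_zero,
    ← Finset.sum_range_reflect]
  apply Finset.sum_congr rfl
  intro j hj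
  rw [Finset.mem_range] at hj
  rw [show p - 1 - j = p - (j + 1) by omega, Nat.choose_symm (by omega),
    show p - (j + 1) + 1 = p + 1 - (j + 1) by omega]

/-- Shifted second moment sum, in ℕ. -/
lemma moment_sum (p m : ℕ) :
    ∑ ℓ ∈ range (p + 1), ℓ * (ℓ + 1) * ((p + 2).choose (ℓ + 1) * m.choose ℓ)
      = (p + 1) * (p + 2) * ∑ j ∈ range p, p.choose j * m.choose (j + 1) := by
  rw [Finset.sum_range_succ', Finset.mul_sum]
  simp only [zero_mul, add_zero]
  apply Finset.sum_congr rfl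
  intro j _
  have e1 : (p + 2) * (p + 1).choose (j + 1) = (p + 2).choose (j + 2) * (j + 2) :=
    Nat.add_one_mul_choose_eq (p + 1) (j + 1)
  have e2 : (p + 1) * p.choose j = (p + 1).choose (j + 1) * (j + 1) :=
    Nat.add_one_mul_choose_eq p j
  have e1' : ((p : ℤ) + 2) * ((p + 1).choose (j + 1)) = ((p + 2).choose (j + 2)) * (j + 2) := by
    exact_mod_cast e1
  have e2' : ((p : ℤ) + 1) * (p.choose j) = ((p + 1).choose (j + 1)) * (j + 1) := by
    exact_mod_cast e2
  show (j + 1) * (j + 2) * ((p + 2).choose (j + 2) * m.choose (j + 1))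
      = (p + 1) * (p + 2) * (p.choose j * m.choose (j + 1))
  have : ((j : ℤ) + 1) * (j + 2) * ((p + 2).choose (j + 2) * m.choose (j + 1))
      = ((p : ℤ) + 1) * ((p : ℤ) + 2) * (p.choose j * m.choose (j + 1)) := by
    linear_combination (-((j : ℤ) + 1)) * (m.choose (j + 1)) * e1'
      + (-((p : ℤ) + 2)) * (m.choose (j + 1)) * e2'
  exact_mod_cast this

/-- For positive integers `n`, `k`, the sum over `ℓ` from `0` to `n-1` of
`C(n+1, ℓ+1) · ((n-ℓ)(n+ℓ+1)/2) · C(n+k-2, ℓ)` equals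
`(n(n+1)/2) · (C(k+2n-1, n) - C(k+2n-3, n))`. -/
theorem dof_count_boundary (n k : ℕ) (hn : 1 ≤ n) (hk : 0 < k) :
    ∑ ℓ ∈ Finset.range n,
        (n + 1).choose (ℓ + 1) * ((n - ℓ) * (n + ℓ + 1) / 2) * (n + k - 2).choose ℓ
      = n * (n + 1) / 2 * ((k + 2 * n - 1).choose n - (k + 2 * n - 3).choose n) := by
  obtain ⟨p, rfl⟩ : ∃ p, n = p + 1 := ⟨n - 1, by omega⟩
  set m := p + 1 + k - 2 with hm
  have e1 : k + 2 * (p + 1) - 1 = m + p + 2 := by omega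
  have e3 : k + 2 * (p + 1) - 3 = m + p := by omega
  rw [e1, e3]
  -- multiply by 2
  have key : 2 * (∑ ℓ ∈ Finset.range (p + 1),
        (p + 1 + 1).choose (ℓ + 1) * ((p + 1 - ℓ) * (p + 1 + ℓ + 1) / 2) * m.choose ℓ)
      = 2 * ((p + 1) * (p + 1 + 1) / 2 * ((m + p + 2).choose (p + 1) - (m + p).choose (p + 1))) := by
    rw [Finset.mul_sum]
    have hterm : ∀ ℓ ∈ Finset.range (p + 1),
        2 * ((p + 1 + 1).choose (ℓ + 1) * ((p + 1 - ℓ) * (p + 1 + ℓ + 1) / 2) * m.choose ℓ)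
        = (p + 2).choose (ℓ + 1) * ((p + 1 - ℓ) * (p + 2 + ℓ)) * m.choose ℓ := by
      intro ℓ hℓ
      rw [Finset.mem_range] at hℓ
      have hdvd : 2 ∣ (p + 1 - ℓ) * (p + 1 + ℓ + 1) := by
        rcases Nat.even_or_odd (p + 1 - ℓ) with h | h
        · exact Dvd.dvd.mul_right h.two_dvd _
        · obtain ⟨c, hc⟩ := h
          have : p + 1 + ℓ + 1 = 2 * (c + ℓ + 1) := by omega
          rw [this]; exact ⟨(p + 1 - ℓ) * (c + ℓ + 1), by ring⟩
      rw [show (p+1+1) = p+2 from rfl, show p + 1 + ℓ + 1 = p + 2 + ℓ by omega] at *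
      calc 2 * ((p + 2).choose (ℓ + 1) * ((p + 1 - ℓ) * (p + 2 + ℓ) / 2) * m.choose ℓ)
          = (p + 2).choose (ℓ + 1) * (2 * ((p + 1 - ℓ) * (p + 2 + ℓ) / 2)) * m.choose ℓ := by ring
        _ = (p + 2).choose (ℓ + 1) * ((p + 1 - ℓ) * (p + 2 + ℓ)) * m.choose ℓ := by
            rw [Nat.two_mul_div_two_of_even (even_iff_two_dvd.mpr hdvd)]
    rw [Finset.sum_congr rfl hterm]
    have hdvd2 : 2 ∣ (p + 1) * (p + 1 + 1) := (Nat.even_mul_succ_self (p + 1)).two_dvd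
    rw [show 2 * ((p + 1) * (p + 1 + 1) / 2 * ((m + p + 2).choose (p + 1) - (m + p).choose (p + 1)))
        = 2 * ((p + 1) * (p + 1 + 1) / 2) * ((m + p + 2).choose (p + 1) - (m + p).choose (p + 1)) by ring,
      Nat.two_mul_div_two_of_even (even_iff_two_dvd.mpr hdvd2)]
    -- now pass to ℤ
    have hmono : (m + p).choose (p + 1) ≤ (m + p + 2).choose (p + 1) :=
      Nat.choose_le_choose _ (by omega)
    have hA := vand1 (p + 1) m
    rw [show p + 1 + 1 + m = m + p + 2 by omega] at hA
    have hB := vand2 p m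
    rw [show p + m = m + p by omega] at hB
    have hM := moment_sum p m
    zify [hmono]
    -- cast the auxiliary identities to ℤ
    have hA' : (∑ ℓ ∈ range (p + 1), ((p + 2).choose (ℓ + 1) : ℤ) * m.choose ℓ)
        + (m.choose (p + 1) : ℤ) = ((m + p + 2).choose (p + 1) : ℤ) := by exact_mod_cast hA
    have hB' : (∑ j ∈ range p, (p.choose j : ℤ) * m.choose (j + 1))
        + (m.choose (p + 1) : ℤ) = ((m + p).choose (p + 1) : ℤ) := by exact_mod_cast hB
    have hM' : (∑ ℓ ∈ range (p + 1), (ℓ : ℤ) * (ℓ + 1) * ((p + 2).choose (ℓ + 1) * m.choose ℓ))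
        = ((p : ℤ) + 1) * ((p : ℤ) + 2) * ∑ j ∈ range p, (p.choose j : ℤ) * m.choose (j + 1) := by
      exact_mod_cast hM
    -- split each term of the sum
    have hsplit : ∀ ℓ ∈ Finset.range (p + 1),
        ((p + 2).choose (ℓ + 1) : ℤ) * (((p + 1 - ℓ : ℕ) : ℤ) * ((p : ℤ) + 2 + ℓ)) * m.choose ℓ
        = ((p : ℤ) + 1) * ((p : ℤ) + 2) * (((p + 2).choose (ℓ + 1) : ℤ) * m.choose ℓ)
          - (ℓ : ℤ) * (ℓ + 1) * (((p + 2).choose (ℓ + 1) : ℤ) * m.choose ℓ) := by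
      intro ℓ hℓ
      rw [Finset.mem_range] at hℓ
      rw [Nat.cast_sub (by omega : ℓ ≤ p + 1)]
      push_cast
      ring
    rw [Finset.sum_congr rfl hsplit, Finset.sum_sub_distrib, ← Finset.mul_sum, hM']
    linear_combination ((p : ℤ) + 1) * ((p : ℤ) + 2) * hA'
      - ((p : ℤ) + 1) * ((p : ℤ) + 2) * hB'
  omega
end

section
/- Let x₀, x₁, ..., xₙ be n+1 points in ℝⁿ in general position (i.e., the vectors x₁ - x₀, ..., xₙ - x₀ are linearly independent). For each pair 0 ≤ i < j ≤ n, let t_{i,j} = xⱼ - xᵢ be the edge vector and T_{i,j} = t_{i,j} t_{i,j}ᵀ the associated rank-one symmetric matrix. Then the n(n+1)/2 symmetric matrices T_{i,j} are linearly independent and form a basis of the space 𝕊 of symmetric n×n real matrices. -/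
open Matrix

/-- The subspace of symmetric `n × n` real matrices. -/
def symMatrixSubspace (n : ℕ) : Submodule ℝ (Matrix (Fin n) (Fin n) ℝ) where
  carrier := {A | A.IsSymm}
  add_mem' := by
    intro A B hA hB
    simp only [Set.mem_setOf_eq, Matrix.IsSymm] at *
    simp [Matrix.transpose_add, hA, hB]
  zero_mem' := by simp [Matrix.IsSymm]
  smul_mem' := by
    intro c A hA
    simp only [Set.mem_setOf_eq, Matrix.IsSymm] at *
    simp [Matrix.transpose_smul, hA]

lemma mem_symMatrixSubspace {n : ℕ} {A : Matrix (Fin n) (Fin n) ℝ} :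
    A ∈ symMatrixSubspace n ↔ A.IsSymm := Iff.rfl

def dotL {n : ℕ} (y z : Fin n → ℝ) : Matrix (Fin n) (Fin n) ℝ →ₗ[ℝ] ℝ where
  toFun A := y ⬝ᵥ A.mulVec z
  map_add' A B := by simp [Matrix.add_mulVec, dotProduct_add]
  map_smul' c A := by simp [Matrix.smul_mulVec]

lemma dot_mulVec_vmv {n : ℕ} (y z v w : Fin n → ℝ) :
    y ⬝ᵥ (vecMulVec v w).mulVec z = (y ⬝ᵥ v) * (w ⬝ᵥ z) := by
  simp [Matrix.mulVec, vecMulVec_apply, dotProduct, Finset.mul_sum, Finset.sum_mul]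
  rw [Finset.sum_comm]
  apply Finset.sum_congr rfl; intros; apply Finset.sum_congr rfl; intros; ring

lemma vmv_sub {n : ℕ} (v w : Fin n → ℝ) :
    vecMulVec (v - w) (v - w) =
      vecMulVec v v + vecMulVec w w - vecMulVec v w - vecMulVec w v := by
  ext i j
  simp [vecMulVec_apply]
  ring

lemma cancel_aux {n : ℕ} (Y E C : Matrix (Fin n) (Fin n) ℝ) (hYE : Y * E = 1)
    (h : Y * C * Yᵀ = 0) : C = 0 := by
  have hEY : E * Y = 1 := mul_eq_one_comm.mp hYE
  calc C = (E*Y) * C * (E*Y)ᵀ := by simp [hEY]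
    _ = E * (Y*C*Yᵀ) * Eᵀ := by simp [Matrix.transpose_mul, Matrix.mul_assoc]
    _ = 0 := by simp [h]

lemma mulmul_apply {n : ℕ} (y : Fin n → Fin n → ℝ) (C : Matrix (Fin n) (Fin n) ℝ) (a c : Fin n) :
    ((Matrix.of y) * C * (Matrix.of y)ᵀ) a c = y a ⬝ᵥ C.mulVec (y c) := by
  simp [Matrix.mul_apply, Matrix.mulVec, dotProduct, Finset.mul_sum, Finset.sum_mul]
  rw [Finset.sum_comm]
  apply Finset.sum_congr rfl; intros; apply Finset.sum_congr rfl; intros; ring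

theorem span_aux (n : ℕ) (x : Fin (n + 1) → (Fin n → ℝ)) (y : Fin n → Fin n → ℝ)
    (hye : ∀ a c, y a ⬝ᵥ (x c.succ - x 0) = if a = c then 1 else 0)
    (T : {p : Fin (n + 1) × Fin (n + 1) // p.1 < p.2} → Matrix (Fin n) (Fin n) ℝ)
    (hT : ∀ p, T p = Matrix.vecMulVec (x p.1.2 - x p.1.1) (x p.1.2 - x p.1.1)) :
    Submodule.span ℝ (Set.range T) = symMatrixSubspace n := by
  classical
  set e : Fin n → Fin n → ℝ := fun c => x c.succ - x 0 with he
  apply le_antisymm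
  · rw [Submodule.span_le]
    rintro _ ⟨p, rfl⟩
    rw [SetLike.mem_coe, mem_symMatrixSubspace, hT, Matrix.IsSymm]
    ext i j
    simp [vecMulVec_apply, mul_comm]
  · intro A hA
    rw [mem_symMatrixSubspace] at hA
    set S := Submodule.span ℝ (Set.range T) with hS
    -- the symmetrized rank-one matrices are in the span
    have hG : ∀ a c : Fin n,
        vecMulVec (e a) (e c) + vecMulVec (e c) (e a) ∈ S := by
      intro a c
      have mem0 : ∀ m : Fin n, vecMulVec (e m) (e m) ∈ S := by
        intro m
        have h1 : T ⟨(0, m.succ), Fin.succ_pos m⟩ = vecMulVec (e m) (e m) := by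
          rw [hT]
        rw [← h1]
        exact Submodule.subset_span (Set.mem_range_self _)
      rcases lt_trichotomy a c with hac | hac | hac
      · have h2 : T ⟨(a.succ, c.succ), Fin.succ_lt_succ_iff.mpr hac⟩
            = vecMulVec (e c - e a) (e c - e a) := by
          have harg : x c.succ - x a.succ = e c - e a := by simp only [he]; abel
          rw [hT]
          show vecMulVec (x c.succ - x a.succ) (x c.succ - x a.succ) = _
          rw [harg]
        have h3 := vmv_sub (e c) (e a)
        have : vecMulVec (e a) (e c) + vecMulVec (e c) (e a)
            = vecMulVec (e c) (e c) + vecMulVec (e a) (e a)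
              - T ⟨(a.succ, c.succ), Fin.succ_lt_succ_iff.mpr hac⟩ := by
          rw [h2, h3]; abel
        rw [this]
        exact sub_mem (add_mem (mem0 c) (mem0 a))
          (Submodule.subset_span (Set.mem_range_self _))
      · subst hac
        have : vecMulVec (e a) (e a) + vecMulVec (e a) (e a)
            = (2:ℝ) • vecMulVec (e a) (e a) := by
          rw [two_smul]
        rw [this]
        exact Submodule.smul_mem _ _ (mem0 a)
      · have h2 : T ⟨(c.succ, a.succ), Fin.succ_lt_succ_iff.mpr hac⟩
            = vecMulVec (e a - e c) (e a - e c) := by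
          have harg : x a.succ - x c.succ = e a - e c := by simp only [he]; abel
          rw [hT]
          show vecMulVec (x a.succ - x c.succ) (x a.succ - x c.succ) = _
          rw [harg]
        have h3 := vmv_sub (e a) (e c)
        have : vecMulVec (e a) (e c) + vecMulVec (e c) (e a)
            = vecMulVec (e a) (e a) + vecMulVec (e c) (e c)
              - T ⟨(c.succ, a.succ), Fin.succ_lt_succ_iff.mpr hac⟩ := by
          rw [h2, h3]; abel
        rw [this]
        exact sub_mem (add_mem (mem0 a) (mem0 c))
          (Submodule.subset_span (Set.mem_range_self _))
    set M : Fin n → Fin n → ℝ := fun a c => y a ⬝ᵥ A.mulVec (y c) with hM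
    have hMsym : ∀ a c, M c a = M a c := by
      intro a c
      rw [hM]
      show y c ⬝ᵥ A.mulVec (y a) = y a ⬝ᵥ A.mulVec (y c)
      rw [dotProduct_mulVec, ← Matrix.mulVec_transpose, hA, dotProduct_comm]
    set R : Matrix (Fin n) (Fin n) ℝ :=
      ∑ a, ∑ c, (M a c / 2) • (vecMulVec (e a) (e c) + vecMulVec (e c) (e a)) with hR
    have hRS : R ∈ S := by
      apply Submodule.sum_mem
      intro a _
      apply Submodule.sum_mem
      intro c _
      exact Submodule.smul_mem _ _ (hG a c)
    have hdot : ∀ a a' c c' : Fin n, dotL (y a) (y c) (vecMulVec (e a') (e c'))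
        = (if a = a' then (1:ℝ) else 0) * (if c = c' then 1 else 0) := by
      intro a a' c c'
      show y a ⬝ᵥ (vecMulVec (e a') (e c')).mulVec (y c) = _
      rw [dot_mulVec_vmv, dotProduct_comm (e c') (y c), he]
      rw [hye, hye]
    have hAR : A = R := by
      have hC : A - R = 0 := by
        apply cancel_aux (Matrix.of y) (Matrix.of (fun q c => e c q))
        · ext a c
          rw [Matrix.mul_apply, Matrix.one_apply]
          have : ∑ q, Matrix.of y a q * Matrix.of (fun q c => e c q) q c
              = y a ⬝ᵥ e c := rfl
          rw [this, he, hye]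
        · ext a c
          rw [mulmul_apply]
          show dotL (y a) (y c) (A - R) = (0 : Matrix (Fin n) (Fin n) ℝ) a c
          rw [map_sub]
          have hRval : dotL (y a) (y c) R = M a c := by
            rw [hR, map_sum]
            have : ∀ a' : Fin n, dotL (y a) (y c)
                (∑ c', (M a' c' / 2) • (vecMulVec (e a') (e c') + vecMulVec (e c') (e a')))
                = ∑ c', (M a' c' / 2) *
                  ((if a = a' then (1:ℝ) else 0) * (if c = c' then 1 else 0)
                    + (if a = c' then (1:ℝ) else 0) * (if c = a' then 1 else 0)) := by
              intro a'
              rw [map_sum]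
              apply Finset.sum_congr rfl
              intro c' _
              rw [LinearMap.map_smul, map_add, hdot, hdot, smul_eq_mul]
            rw [Finset.sum_congr rfl (fun a' _ => this a')]
            have step : ∀ a' : Fin n, (∑ c' : Fin n, (M a' c' / 2) *
                ((if a = a' then (1:ℝ) else 0) * (if c = c' then 1 else 0)
                  + (if a = c' then (1:ℝ) else 0) * (if c = a' then 1 else 0)))
                = (if a = a' then M a' c / 2 else 0) + (if c = a' then M a' a / 2 else 0) := by
              intro a'
              rw [Finset.sum_congr rfl (fun c' _ => mul_add (M a' c' / 2) _ _),
                Finset.sum_add_distrib]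
              congr 1
              · split_ifs with h
                · subst h
                  simp [mul_ite, Finset.sum_ite_eq, eq_comm]
                · simp [h]
              · split_ifs with h
                · subst h
                  simp [mul_ite, ite_mul, Finset.sum_ite_eq, eq_comm]
                · simp [h]
            rw [Finset.sum_congr rfl (fun a' _ => step a'), Finset.sum_add_distrib]
            simp [Finset.sum_ite_eq, eq_comm]
            rw [hMsym c a]
            ring
          have hAval : dotL (y a) (y c) A = M a c := rfl
          rw [hAval, hRval]
          simp
      have := sub_eq_zero.mp hC
      exact this
    rw [hAR]
    exact hRS

lemma delta_prod_zero {n : ℕ} (a c : Fin n) (i j : Fin (n+1)) (hij : i < j) (hac : a < c)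
    (hne : ¬(i = a.succ ∧ j = c.succ)) :
    ((if j = a.succ then (1:ℝ) else 0) - (if i = a.succ then 1 else 0)) *
      ((if j = c.succ then (1:ℝ) else 0) - (if i = c.succ then 1 else 0)) = 0 := by
  split_ifs with h1 h2 h3 h4 <;> try ring
  all_goals exfalso
  all_goals
    first
    | exact hne ⟨by assumption, by assumption⟩
    | exact hac.ne (Fin.succ_inj.mp (by rw [← ‹j = a.succ›, ‹j = c.succ›]))
    | exact hac.ne (Fin.succ_inj.mp (by rw [← ‹i = a.succ›, ‹i = c.succ›]))
    | exact (lt_asymm hac) (Fin.succ_lt_succ_iff.mp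
        (by rw [← ‹i = c.succ›, ← ‹j = a.succ›]; exact hij))

lemma delta_sq_zero {n : ℕ} (c : Fin n) (i j : Fin (n+1)) (hi : i = 0) (hj : j ≠ c.succ) :
    ((if j = c.succ then (1:ℝ) else 0) - (if i = c.succ then 1 else 0)) *
      ((if j = c.succ then (1:ℝ) else 0) - (if i = c.succ then 1 else 0)) = 0 := by
  subst hi
  rw [if_neg hj, if_neg (Fin.succ_ne_zero c).symm]
  ring

theorem indep_aux (n : ℕ) (x : Fin (n + 1) → (Fin n → ℝ)) (y : Fin n → Fin n → ℝ)
    (hye : ∀ a c, y a ⬝ᵥ (x c.succ - x 0) = if a = c then 1 else 0)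
    (T : {p : Fin (n + 1) × Fin (n + 1) // p.1 < p.2} → Matrix (Fin n) (Fin n) ℝ)
    (hT : ∀ p, T p = Matrix.vecMulVec (x p.1.2 - x p.1.1) (x p.1.2 - x p.1.1)) :
    LinearIndependent ℝ T := by
  classical
  set d : Fin n → Fin (n+1) → ℝ := fun a i => if i = a.succ then 1 else 0 with hd
  have hyd : ∀ a i, y a ⬝ᵥ (x i - x 0) = d a i := by
    intro a i
    induction i using Fin.cases with
    | zero => simp [hd, (Fin.succ_ne_zero a).symm]
    | succ c => rw [hye a c, hd]; simp [Fin.succ_inj, eq_comm]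
  have hyt : ∀ a (i j : Fin (n+1)), y a ⬝ᵥ (x j - x i) = d a j - d a i := by
    intro a i j
    have : x j - x i = (x j - x 0) - (x i - x 0) := by abel
    rw [this, dotProduct_sub, hyd, hyd]
  have keyL : ∀ a c p, dotL (y a) (y c) (T p)
      = (d a p.1.2 - d a p.1.1) * (d c p.1.2 - d c p.1.1) := by
    intro a c p
    show y a ⬝ᵥ (T p).mulVec (y c) = _
    rw [hT, dot_mulVec_vmv, hyt, dotProduct_comm, hyt]
  rw [Fintype.linearIndependent_iff]
  intro g hg
  have hL : ∀ a c, ∑ p, g p * ((d a p.1.2 - d a p.1.1) * (d c p.1.2 - d c p.1.1)) = 0 := by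
    intro a c
    have h2 := congrArg (dotL (y a) (y c)) hg
    rw [map_sum, map_zero] at h2
    simpa only [LinearMap.map_smul, smul_eq_mul, keyL] using h2
  have claim1 : ∀ (a c : Fin n) (h : a < c),
      g ⟨(a.succ, c.succ), Fin.succ_lt_succ_iff.mpr h⟩ = 0 := by
    intro a c hac
    have h2 := hL a c
    rw [Finset.sum_eq_single (⟨(a.succ, c.succ), Fin.succ_lt_succ_iff.mpr hac⟩ :
        {p : Fin (n + 1) × Fin (n + 1) // p.1 < p.2})] at h2
    · have hval : (d a c.succ - d a a.succ) * (d c c.succ - d c a.succ) = -1 := by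
        simp [hd, Fin.succ_inj, hac.ne, hac.ne']
      rw [hval] at h2
      linarith
    · intro p _ hne
      have hne' : ¬(p.1.1 = a.succ ∧ p.1.2 = c.succ) := by
        rintro ⟨e1, e2⟩
        exact hne (Subtype.ext (Prod.ext_iff.mpr ⟨e1, e2⟩))
      rw [hd, delta_prod_zero a c p.1.1 p.1.2 p.2 hac hne', mul_zero]
    · simp
  have claim2 : ∀ (c : Fin n), g ⟨(0, c.succ), Fin.succ_pos c⟩ = 0 := by
    intro c
    have h2 := hL c c
    rw [Finset.sum_eq_single (⟨(0, c.succ), Fin.succ_pos c⟩ :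
        {p : Fin (n + 1) × Fin (n + 1) // p.1 < p.2})] at h2
    · have hval : (d c c.succ - d c 0) * (d c c.succ - d c 0) = 1 := by
        simp [hd, (Fin.succ_ne_zero c).symm]
      rw [hval] at h2
      linarith
    · intro p _ hne
      have hp := p.2
      rcases Fin.eq_zero_or_eq_succ p.1.1 with h0 | ⟨m, hm⟩
      · have hj : p.1.2 ≠ c.succ := by
          intro hcon
          exact hne (Subtype.ext (Prod.ext_iff.mpr ⟨h0, hcon⟩))
        rw [hd, delta_sq_zero c p.1.1 p.1.2 h0 hj, mul_zero]
      · rcases Fin.eq_zero_or_eq_succ p.1.2 with k0 | ⟨k, hk⟩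
        · exfalso; rw [k0] at hp; exact Fin.not_lt_zero _ hp
        · have hmk : m < k := by
            rw [hm, hk] at hp; exact Fin.succ_lt_succ_iff.mp hp
          have hps : p = ⟨(m.succ, k.succ), Fin.succ_lt_succ_iff.mpr hmk⟩ :=
            Subtype.ext (Prod.ext_iff.mpr ⟨hm, hk⟩)
          rw [hps, claim1 m k hmk, zero_mul]
    · simp
  intro p
  obtain ⟨⟨i, j⟩, hp⟩ := p
  rcases Fin.eq_zero_or_eq_succ j with j0 | ⟨k, hk⟩
  · exfalso; rw [j0] at hp; exact Fin.not_lt_zero _ hp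
  rcases Fin.eq_zero_or_eq_succ i with i0 | ⟨m, hm⟩
  · have heq : (⟨(i, j), hp⟩ : {p : Fin (n + 1) × Fin (n + 1) // p.1 < p.2})
        = ⟨(0, k.succ), Fin.succ_pos k⟩ := Subtype.ext (Prod.ext_iff.mpr ⟨i0, hk⟩)
    rw [heq]; exact claim2 k
  · have hmk : m < k := by
      rw [hm, hk] at hp; exact Fin.succ_lt_succ_iff.mp hp
    have heq : (⟨(i, j), hp⟩ : {p : Fin (n + 1) × Fin (n + 1) // p.1 < p.2})
        = ⟨(m.succ, k.succ), Fin.succ_lt_succ_iff.mpr hmk⟩ :=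
      Subtype.ext (Prod.ext_iff.mpr ⟨hm, hk⟩)
    rw [heq]; exact claim1 m k hmk

/-- Let `x₀, …, xₙ` be `n+1` points of `ℝⁿ` in general position. For each pair
`i < j`, let `T_{i,j} = t_{i,j} t_{i,j}ᵀ` with `t_{i,j} = xⱼ - xᵢ`. Then these
`n(n+1)/2` rank-one symmetric matrices are linearly independent and form a basis
of the space of symmetric `n × n` matrices. -/
theorem edge_tensors_basis (n : ℕ) (x : Fin (n + 1) → (Fin n → ℝ))
    (hx : LinearIndependent ℝ (fun i : Fin n => x i.succ - x 0))
    (T : {p : Fin (n + 1) × Fin (n + 1) // p.1 < p.2} → Matrix (Fin n) (Fin n) ℝ)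
    (hT : ∀ p, T p = Matrix.vecMulVec (x p.1.2 - x p.1.1) (x p.1.2 - x p.1.1)) :
    LinearIndependent ℝ T ∧ Submodule.span ℝ (Set.range T) = symMatrixSubspace n := by
  have hy : ∃ y : Fin n → Fin n → ℝ,
      ∀ a c, y a ⬝ᵥ (x c.succ - x 0) = if a = c then 1 else 0 := by
    have hcard : Fintype.card (Fin n) = Module.finrank ℝ (Fin n → ℝ) := by simp
    let b : Module.Basis (Fin n) ℝ (Fin n → ℝ) :=
      Module.Basis.mk hx (hx.span_eq_top_of_card_eq_finrank' hcard).ge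
    have hb : ∀ c, b c = x c.succ - x 0 := fun c => by simp [b]
    refine ⟨fun a q => b.coord a (Pi.single q 1), fun a c => ?_⟩
    have ydot : ∀ (v : Fin n → ℝ) a, (fun q => b.coord a (Pi.single q 1)) ⬝ᵥ v = b.coord a v := by
      intro v a
      have hv : v = ∑ q, v q • (Pi.single q 1 : Fin n → ℝ) := by
        rw [← Finset.univ_sum_single v]
        congr 1; ext q j
        simp [Pi.single_apply]
      conv_rhs => rw [hv]
      rw [map_sum]
      simp [dotProduct, mul_comm]
    rw [← hb, ydot, Module.Basis.coord_apply, b.repr_self, Finsupp.single_apply]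
    simp [eq_comm]
  obtain ⟨y, hye⟩ := hy
  exact ⟨indep_aux n x y hye T hT, span_aux n x y hye T hT⟩
end

section
/- Let K be a nondegenerate n-simplex with barycentric coordinates λ₀, ..., λₙ and edge rank-one tensors T_{i,j} for 0 ≤ i < j ≤ n. Then every function in the space Σ_{K,k,b} := Σ_{0≤i<j≤n} λᵢλⱼ P_{k-2}(K; ℝ) T_{i,j} satisfies τν = 0 on the boundary ∂K, where ν is the outward normal of ∂K. -/
/-- On a nondegenerate `n`-simplex `K` with barycentric coordinates `λ₀,…,λₙ` and
edge rank-one tensors `T_{i,j} = (xⱼ-xᵢ)(xⱼ-xᵢ)ᵀ`, every member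
`τ = ∑_{i,j} λᵢλⱼ p_{ij} T_{i,j}` of the bubble space `Σ_{K,k,b}` satisfies
`τν = 0` on the boundary `∂K`: at any boundary point `y` (where all `λᵢ(y) ≥ 0`
and `λ_m(y) = 0` for some `m`), `τ(y)ν = 0` for the normal `ν` of the
corresponding face. -/
theorem bubble_space_normal_vanishes_on_boundary (n k : ℕ) (hk : 2 ≤ k)
    (x : Fin (n + 1) → (Fin n → ℝ))
    (hx : LinearIndependent ℝ (fun i : Fin n => x i.succ - x 0))
    (lam : Fin (n + 1) → (Fin n → ℝ) → ℝ)
    (hlam_bary : ∀ i j, lam i (x j) = if i = j then 1 else 0)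
    (hlam_affine : ∀ i, ∃ (c : ℝ) (w : Fin n → ℝ), ∀ y, lam i y = c + ∑ a, w a * y a)
    (p : Fin (n + 1) → Fin (n + 1) → MvPolynomial (Fin n) ℝ)
    (hp : ∀ i j, (p i j).totalDegree ≤ k - 2)
    (τ : (Fin n → ℝ) → Matrix (Fin n) (Fin n) ℝ)
    (hτ : ∀ y, τ y = ∑ i : Fin (n + 1), ∑ j : Fin (n + 1),
      (lam i y * lam j y * MvPolynomial.eval y (p i j)) •
        Matrix.vecMulVec (x j - x i) (x j - x i))
    (m : Fin (n + 1)) (y : Fin n → ℝ) (hyK : ∀ i, 0 ≤ lam i y) (hym : lam m y = 0)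
    (ν : Fin n → ℝ) (hν : ∀ i j : Fin (n + 1), i ≠ m → j ≠ m →
      dotProduct ν (x j - x i) = 0) :
    (τ y).mulVec ν = 0 := by
  rw [hτ]
  have hsum : ∀ (s : Finset (Fin (n+1))) (f : Fin (n+1) → Matrix (Fin n) (Fin n) ℝ),
      (∑ i ∈ s, f i).mulVec ν = ∑ i ∈ s, (f i).mulVec ν := by
    intro s f
    induction s using Finset.induction with
    | empty => simp [Matrix.zero_mulVec]
    | insert _ _ h ih => simp [Finset.sum_insert h, Matrix.add_mulVec, ih]
  rw [hsum]
  apply Finset.sum_eq_zero; intro i _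
  rw [hsum]
  apply Finset.sum_eq_zero; intro j _
  rw [Matrix.smul_mulVec]
  by_cases hi : i = m
  · subst hi; rw [hym]; simp
  by_cases hj : j = m
  · subst hj; rw [hym]; simp
  · have h1 : (Matrix.vecMulVec (x j - x i) (x j - x i)).mulVec ν
        = (dotProduct (x j - x i) ν) • (x j - x i) := by
      ext a
      simp [Matrix.mulVec, Matrix.vecMulVec, dotProduct, Finset.mul_sum,
        mul_comm, mul_left_comm]
    rw [h1, dotProduct_comm, hν i j hi hj]
    simp
end
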